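/- arXiv:1405.3532 — 5 statements merged into one kernel-verified Lean document; each statement's English description precedes it below -/
import Mathlib

section
/- Let ℓ₀ ≥ 0 be an integer and c ∈ ℤ. Suppose s : ℕ → ℤ is a sequence such that for all ℓ ≥ ℓ₀ and all r with 0 ≤ r ≤ 2^ℓ − 1, one has s(2^ℓ + r) = s(r) + c if 2r ≤ 2^ℓ, and s(2^ℓ + r) = s(2^{ℓ+1} − r) if 2r > 2^ℓ. Then s is 2-regular. -/
def Vaux : ℕ → ℤ × ℤ × ℤ × ℤ
  | 0 => (0, 1, 0, 0)
  | 1 => (1, 0, 0, 1)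
  | (n+2) =>
    if _h : 2 * ((n+2) - 2 ^ Nat.log 2 (n+2)) < 2 ^ Nat.log 2 (n+2) then
      let v := Vaux ((n+2) - 2 ^ Nat.log 2 (n+2))
      (1 + v.1, v.2.1, v.2.2.1, v.2.2.2)
    else
      let v := Vaux (3 * 2 ^ Nat.log 2 (n+2) - 1 - (n+2))
      (v.1, v.2.2.1, v.2.1, v.2.2.2)
  decreasing_by
  · have h1 : 2 ^ Nat.log 2 (n+2) ≤ n + 2 := Nat.pow_log_le_self 2 (by omega)
    omega
  · have h1 : 2 ^ Nat.log 2 (n+2) ≤ n + 2 := Nat.pow_log_le_self 2 (by omega)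
    have h2 : 0 < 2 ^ Nat.log 2 (n+2) := Nat.pow_pos (by norm_num)
    omega

lemma Vaux_eq (n : ℕ) (h : 2 ≤ n) :
    Vaux n = if 2 * (n - 2 ^ Nat.log 2 n) < 2 ^ Nat.log 2 n then
      ((1 + (Vaux (n - 2 ^ Nat.log 2 n)).1, (Vaux (n - 2 ^ Nat.log 2 n)).2.1,
        (Vaux (n - 2 ^ Nat.log 2 n)).2.2.1, (Vaux (n - 2 ^ Nat.log 2 n)).2.2.2))
    else
      ((Vaux (3 * 2 ^ Nat.log 2 n - 1 - n)).1, (Vaux (3 * 2 ^ Nat.log 2 n - 1 - n)).2.2.1,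
       (Vaux (3 * 2 ^ Nat.log 2 n - 1 - n)).2.1, (Vaux (3 * 2 ^ Nat.log 2 n - 1 - n)).2.2.2) := by
  obtain ⟨k, rfl⟩ : ∃ k, n = k + 2 := ⟨n - 2, by omega⟩
  rw [Vaux]
  split <;> simp

section
variable (l0 : ℕ) (c : ℤ) (s : ℕ → ℤ)
variable (hrec : ∀ l, l0 ≤ l → ∀ r, r < 2 ^ l →
      s (2 ^ l + r) = if 2 * r ≤ 2 ^ l then s r + c else s (2 ^ (l + 1) - r))
include hrec

lemma T0 : ∀ n, ∀ i, l0 ≤ i → s (2 ^ i * n) = s (2 ^ l0 * n) := by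
  intro n
  induction n using Nat.strong_induction_on with
  | _ n IH =>
    intro i hi
    rcases Nat.eq_zero_or_pos n with rfl | hn
    · simp
    set m := Nat.log 2 n with hm
    have hm1 : 2 ^ m ≤ n := Nat.pow_log_le_self 2 (by omega)
    have hm2 : n < 2 ^ (m+1) := Nat.lt_pow_succ_log_self (by norm_num) n
    rw [pow_succ] at hm2
    set r := n - 2 ^ m with hr
    have hpos : 0 < 2 ^ m := Nat.pow_pos (by norm_num)
    have key : ∀ i', l0 ≤ i' →
        s (2 ^ i' * n) = (if 2 * r ≤ 2 ^ m then s (2 ^ i' * r) + c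
          else s (2 ^ i' * (3 * 2 ^ m - n))) := by
      intro i' hi'
      have hx : 2 ^ i' * n = 2 ^ (i' + m) + 2 ^ i' * r := by
        rw [pow_add]
        have : n = 2 ^ m + r := by omega
        rw [this]; ring
      have hRlt : 2 ^ i' * r < 2 ^ (i' + m) := by
        rw [pow_add]
        calc 2 ^ i' * r < 2 ^ i' * r + 2 ^ i' := by
              have : 0 < 2 ^ i' := Nat.pow_pos (by norm_num); omega
          _ = 2 ^ i' * (r + 1) := by ring
          _ ≤ 2 ^ i' * 2 ^ m := mul_le_mul_right (by omega) _
      have hcond : (2 * (2 ^ i' * r) ≤ 2 ^ (i' + m)) ↔ (2 * r ≤ 2 ^ m) := by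
        rw [pow_add]
        have e1 : 2 * (2 ^ i' * r) = 2 ^ i' * (2 * r) := by ring
        rw [e1]
        exact ⟨fun h => Nat.le_of_mul_le_mul_left h (Nat.pow_pos (by norm_num)),
          fun h => mul_le_mul_right h _⟩
      rw [hx, hrec (i' + m) (by omega) _ hRlt]
      by_cases hb : 2 * r ≤ 2 ^ m
      · rw [if_pos (hcond.2 hb), if_pos hb]
      · rw [if_neg (fun hh => hb (hcond.1 hh)), if_neg hb]
        congr 1
        have h1 : 2 ^ (i' + m + 1) = 2 ^ i' * (2 * 2 ^ m) := by
          rw [pow_add, pow_succ]; ring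
        have h2 : 3 * 2 ^ m - n = 2 * 2 ^ m - r := by omega
        have e1 := Nat.mul_sub_left_distrib (2 ^ i') (2 * 2 ^ m) r
        rw [h1, h2]
        omega
    rw [key i hi, key l0 le_rfl]
    by_cases hb : 2 * r ≤ 2 ^ m
    · rw [if_pos hb, if_pos hb, IH r (by omega) i hi]
    · rw [if_neg hb, if_neg hb, IH (3 * 2 ^ m - n) (by omega) i hi]

lemma main_id : ∀ n, ∀ i, l0 ≤ i → ∀ j, 0 < j → j < 2 ^ i →
    s (2 ^ i * n + j) = c * (Vaux n).1 + s j * (Vaux n).2.1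
      + s (2 ^ i - j) * (Vaux n).2.2.1 + s (min j (2 ^ i - j)) * (Vaux n).2.2.2 := by
  intro n
  induction n using Nat.strong_induction_on with
  | _ n IH =>
    intro i hi j hj0 hj2
    have hipos : 0 < 2 ^ i := Nat.pow_pos (by norm_num)
    match n, IH with
    | 0, _ => simp [Vaux]
    | 1, _ =>
      have h1 : (Vaux 1) = (1, 0, 0, 1) := by rw [Vaux]
      rw [h1]
      simp only [mul_one]
      rw [hrec i hi j hj2]
      by_cases hb : 2 * j ≤ 2 ^ i
      · rw [if_pos hb]
        have hmin : min j (2 ^ i - j) = j := by omega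
        rw [hmin]; ring
      · rw [if_neg hb]
        have harg : 2 ^ (i+1) - j = 2 ^ i + (2 ^ i - j) := by
          have : 2 ^ (i+1) = 2 * 2 ^ i := by rw [pow_succ]; ring
          omega
        rw [harg, hrec i hi (2 ^ i - j) (by omega), if_pos (by omega)]
        have hmin : min j (2 ^ i - j) = 2 ^ i - j := by omega
        rw [hmin]; ring
    | (k+2), IH =>
      set n := k + 2 with hn
      have hn2 : 2 ≤ n := by omega
      set m := Nat.log 2 n with hm
      have hm0 : 1 ≤ m := (Nat.le_log_iff_pow_le (by norm_num) (by omega)).2 (by omega)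
      have hm1 : 2 ^ m ≤ n := Nat.pow_log_le_self 2 (by omega)
      have hm2 : n < 2 ^ (m+1) := Nat.lt_pow_succ_log_self (by norm_num) n
      rw [pow_succ] at hm2
      have hpos : 0 < 2 ^ m := Nat.pow_pos (by norm_num)
      set r := n - 2 ^ m with hr
      have hx : 2 ^ i * n + j = 2 ^ (i + m) + (2 ^ i * r + j) := by
        rw [pow_add]
        have : n = 2 ^ m + r := by omega
        rw [this]; ring
      have hRlt : 2 ^ i * r + j < 2 ^ (i + m) := by
        rw [pow_add]
        calc 2 ^ i * r + j < 2 ^ i * r + 2 ^ i := by omega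
          _ = 2 ^ i * (r + 1) := by ring
          _ ≤ 2 ^ i * 2 ^ m := mul_le_mul_right (by omega) _
      rw [hx, hrec (i + m) (by omega) _ hRlt, Vaux_eq n hn2, ← hm, ← hr]
      by_cases hb : 2 * r < 2 ^ m
      · -- left branch
        have hcond : 2 * (2 ^ i * r + j) ≤ 2 ^ (i + m) := by
          rw [pow_add]
          have hpar : 2 * r + 2 ≤ 2 ^ m := by
            have e : 2 ^ m = 2 * 2 ^ (m - 1) := by
              rw [← pow_succ']
              congr 1
              omega
            have : r < 2 ^ (m-1) := by omega
            omega
          calc 2 * (2 ^ i * r + j) = 2 ^ i * (2 * r) + 2 * j := by ring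
            _ ≤ 2 ^ i * (2 * r) + 2 ^ i * 2 := by omega
            _ = 2 ^ i * (2 * r + 2) := by ring
            _ ≤ 2 ^ i * 2 ^ m := mul_le_mul_right hpar _
        rw [if_pos hcond, if_pos hb]
        rw [IH r (by omega) i hi j hj0 hj2]
        simp only []
        ring
      · -- right branch
        have hcond : ¬ (2 * (2 ^ i * r + j) ≤ 2 ^ (i + m)) := by
          rw [pow_add]
          have h1 : 2 ^ i * 2 ^ m ≤ 2 ^ i * (2 * r) := mul_le_mul_right (by omega) _
          have h2 : 2 * (2 ^ i * r + j) = 2 ^ i * (2 * r) + 2 * j := by ring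
          omega
        rw [if_neg hcond, if_neg hb]
        set n' := 3 * 2 ^ m - 1 - n with hn'
        have hn'lt : n' < n := by omega
        have harg : 2 ^ (i + m + 1) - (2 ^ i * r + j) = 2 ^ i * n' + (2 ^ i - j) := by
          have h1 : 2 ^ (i + m + 1) = 2 ^ i * (2 * 2 ^ m) := by
            rw [pow_add, pow_succ]; ring
          have h2 : n' = 2 * 2 ^ m - (r + 1) := by omega
          have h3 : r + 1 ≤ 2 * 2 ^ m := by omega
          have e1 := Nat.mul_sub_left_distrib (2 ^ i) (2 * 2 ^ m) (r + 1)
          have h4 : 2 ^ i * (r + 1) ≤ 2 ^ i * (2 * 2 ^ m) := mul_le_mul_right h3 _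
          have h5 : 2 ^ i * (r + 1) = 2 ^ i * r + 2 ^ i := by ring
          rw [h1, h2]
          omega
        rw [harg, IH n' hn'lt i hi (2 ^ i - j) (by omega) (by omega)]
        have e2 : 2 ^ i - (2 ^ i - j) = j := by omega
        have e3 : min (2 ^ i - j) j = min j (2 ^ i - j) := min_comm _ _
        rw [e2, e3]
        simp only []
        ring
end

/-- The 2-kernel of a sequence `s : ℕ → ℤ`. -/
def kernel2 (s : ℕ → ℤ) : Set (ℕ → ℤ) :=
  {t | ∃ i j : ℕ, j < 2 ^ i ∧ t = fun n => s (2 ^ i * n + j)}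

/-- A sequence is 2-regular if the ℤ-module spanned by its 2-kernel is finitely generated. -/
def IsTwoRegular (s : ℕ → ℤ) : Prop :=
  (Submodule.span ℤ (kernel2 s)).FG

theorem stmt0 (l0 : ℕ) (c : ℤ) (s : ℕ → ℤ)
    (hrec : ∀ l, l0 ≤ l → ∀ r, r < 2 ^ l →
      s (2 ^ l + r) = if 2 * r ≤ 2 ^ l then s r + c else s (2 ^ (l + 1) - r)) :
    IsTwoRegular s := by
  classical
  set gK : ℕ → ℤ := fun n => (Vaux n).1 with hgK
  set gP : ℕ → ℤ := fun n => (Vaux n).2.1 with hgP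
  set gQ : ℕ → ℤ := fun n => (Vaux n).2.2.1 with hgQ
  set gR : ℕ → ℤ := fun n => (Vaux n).2.2.2 with hgR
  set T : ℕ × ℕ → (ℕ → ℤ) := fun p => fun n => s (2 ^ p.1 * n + p.2) with hT
  set G : Set (ℕ → ℤ) :=
    T '' (Set.Iic l0 ×ˢ Set.Iio (2 ^ l0)) ∪ {gK, gP, gQ, gR} with hG
  have hGfin : G.Finite :=
    (Set.Finite.image _ ((Set.finite_Iic _).prod (Set.finite_Iio _))).union (Set.toFinite _)
  have hsub : kernel2 s ⊆ (Submodule.span ℤ G : Submodule ℤ (ℕ → ℤ)) := by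
    rintro t ⟨i, j, hj, rfl⟩
    by_cases hi : i ≤ l0
    · refine Submodule.subset_span (Or.inl ⟨(i, j), ⟨Set.mem_Iic.mpr hi, Set.mem_Iio.mpr ?_⟩, rfl⟩)
      exact lt_of_lt_of_le hj (Nat.pow_le_pow_right (by norm_num) hi)
    · push_neg at hi
      rcases Nat.eq_zero_or_pos j with rfl | hj0
      · have heq : (fun n => s (2 ^ i * n + 0)) = T (l0, 0) := by
          funext n
          simp only [hT, add_zero]
          exact T0 l0 c s hrec n i (le_of_lt hi)
        rw [heq]
        refine Submodule.subset_span (Or.inl ⟨(l0, 0), ⟨Set.mem_Iic.mpr le_rfl, Set.mem_Iio.mpr ?_⟩, rfl⟩)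
        exact Nat.pow_pos (by norm_num)
      · have heq : (fun n => s (2 ^ i * n + j)) =
            c • gK + s j • gP + s (2 ^ i - j) • gQ + s (min j (2 ^ i - j)) • gR := by
          funext n
          simp only [Pi.add_apply, Pi.smul_apply, smul_eq_mul, hgK, hgP, hgQ, hgR]
          exact main_id l0 c s hrec n i (le_of_lt hi) j hj0 hj
        rw [heq]
        have hK : gK ∈ G := Or.inr (by simp)
        have hP : gP ∈ G := Or.inr (by simp)
        have hQ : gQ ∈ G := Or.inr (by simp)
        have hR : gR ∈ G := Or.inr (by simp)
        exact add_mem (add_mem (add_mem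
          (Submodule.smul_mem _ _ (Submodule.subset_span hK))
          (Submodule.smul_mem _ _ (Submodule.subset_span hP)))
          (Submodule.smul_mem _ _ (Submodule.subset_span hQ)))
          (Submodule.smul_mem _ _ (Submodule.subset_span hR))
  have h1 : Submodule.span ℤ (kernel2 s) ≤ Submodule.span ℤ G := Submodule.span_le.2 hsub
  have h2 : (Submodule.span ℤ G).FG := Submodule.fg_span hGfin
  haveI h3 : IsNoetherian ℤ (Submodule.span ℤ G) := isNoetherian_of_fg_of_noetherian _ h2
  have h4 : ((Submodule.span ℤ (kernel2 s)).comap (Submodule.span ℤ G).subtype).FG :=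
    IsNoetherian.noetherian _
  have h5 := h4.map (Submodule.span ℤ G).subtype
  rwa [Submodule.map_comap_subtype, inf_eq_right.2 h1] at h5
end

section
/- Let A : ℕ → ℤ be defined by A(0) = 0 and, for ℓ ≥ 0 and 0 ≤ r ≤ 2^ℓ − 1, A(2^ℓ + r) = A(r) + 1 if 2r ≤ 2^ℓ and A(2^ℓ + r) = A(2^{ℓ+1} − r) if 2r > 2^ℓ. Then for all n ≥ 0: A(2n) = A(n), A(8n+1) = A(4n+1), A(8n+3) = A(2n+1) + 1, A(8n+5) = A(2n+1) + 1, A(8n+7) = A(4n+3). In particular, A is 2-regular. -/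
lemma decomp2 (n : ℕ) (hn : 1 ≤ n) : ∃ l r : ℕ, r < 2 ^ l ∧ n = 2 ^ l + r := by
  refine ⟨Nat.log 2 n, n - 2 ^ Nat.log 2 n, ?_, ?_⟩
  · have h1 := Nat.pow_log_le_self 2 (by omega : n ≠ 0)
    have h2 := Nat.lt_pow_succ_log_self (by norm_num : 1 < 2) n
    rw [pow_succ] at h2; omega
  · have h1 := Nat.pow_log_le_self 2 (by omega : n ≠ 0)
    omega

lemma Adouble (A : ℕ → ℤ)
    (hArec : ∀ l r : ℕ, r < 2 ^ l →
      A (2 ^ l + r) = if 2 * r ≤ 2 ^ l then A r + 1 else A (2 ^ (l + 1) - r)) :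
    ∀ n, A (2 * n) = A n := by
  intro n
  induction n using Nat.strong_induction_on with
  | _ n IH =>
    rcases Nat.eq_zero_or_pos n with h0 | h0
    · simp [h0]
    obtain ⟨l, r, hr, hn⟩ := decomp2 n h0
    have hp : 1 ≤ 2 ^ l := Nat.one_le_two_pow
    have e1 : (2:ℕ) ^ (l+1) = 2 * 2 ^ l := by rw [pow_succ]; ring
    have e2 : (2:ℕ) ^ (l+1+1) = 4 * 2 ^ l := by rw [pow_succ, pow_succ]; ring
    have h2n : 2 * n = 2 ^ (l+1) + 2 * r := by omega
    have hr2 : 2 * r < 2 ^ (l+1) := by omega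
    have H1 := hArec l r hr
    have H2 := hArec (l+1) (2*r) hr2
    rw [← h2n] at H2
    by_cases hc : 2 * r ≤ 2 ^ l
    · rw [if_pos hc] at H1
      rw [if_pos (by omega : 2 * (2*r) ≤ 2 ^ (l+1))] at H2
      have := IH r (by omega)
      rw [H2, hn, H1, this]
    · rw [if_neg hc] at H1
      rw [if_neg (by omega : ¬ 2 * (2*r) ≤ 2 ^ (l+1))] at H2
      have hsub : 2 ^ (l+1+1) - 2*r = 2 * (2 ^ (l+1) - r) := by omega
      have := IH (2 ^ (l+1) - r) (by omega)
      rw [H2, hn, H1, hsub, this]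

lemma Aodd (A : ℕ → ℤ) (hA0 : A 0 = 0)
    (hArec : ∀ l r : ℕ, r < 2 ^ l →
      A (2 ^ l + r) = if 2 * r ≤ 2 ^ l then A r + 1 else A (2 ^ (l + 1) - r)) :
    ∀ n, A (8*n+1) = A (4*n+1) ∧ A (8*n+3) = A (2*n+1) + 1 ∧
         A (8*n+5) = A (2*n+1) + 1 ∧ A (8*n+7) = A (4*n+3) := by
  -- small values
  have a1 : A 1 = 1 := by have := hArec 0 0 (by norm_num); norm_num [hA0] at this; exact this
  have a3 : A 3 = 2 := by have := hArec 1 1 (by norm_num); norm_num [a1] at this; exact this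
  have a5 : A 5 = 2 := by have := hArec 2 1 (by norm_num); norm_num [a1] at this; exact this
  have a7 : A 7 = 2 := by have := hArec 2 3 (by norm_num); norm_num [a5] at this; exact this
  have a9 : A 9 = 2 := by have := hArec 3 1 (by norm_num); norm_num [a1] at this; exact this
  have a11 : A 11 = 3 := by have := hArec 3 3 (by norm_num); norm_num [a3] at this; exact this
  have a13 : A 13 = 3 := by have := hArec 3 5 (by norm_num); norm_num [a11] at this; exact this
  have a15 : A 15 = 2 := by have := hArec 3 7 (by norm_num); norm_num [a9] at this; exact this
  intro n
  induction n using Nat.strong_induction_on with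
  | _ n IH =>
    match n, IH with
    | 0, _ => exact ⟨by norm_num [a1], by norm_num [a1, a3], by norm_num [a1, a5], by norm_num [a3, a7]⟩
    | 1, _ => exact ⟨by norm_num [a5, a9], by norm_num [a3, a11], by norm_num [a3, a13], by norm_num [a7, a15]⟩
    | (m+2), IH => ?_
    set n := m + 2 with hn2
    have h0 : 2 ≤ n := by omega
    obtain ⟨l, r, hr, hn⟩ := decomp2 n (by omega)
    have hp2 : 2 ≤ 2 ^ l := by
      rcases Nat.eq_zero_or_pos l with h | h
      · subst h; simp at hr; omega
      · calc 2 = 2^1 := rfl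
        _ ≤ 2^l := Nat.pow_le_pow_right (by norm_num) h
    have hpe : (2:ℕ) ∣ 2 ^ l := by
      rcases Nat.eq_zero_or_pos l with h | h
      · subst h; omega
      · exact dvd_pow_self 2 (by omega)
    have e1 : (2:ℕ)^(l+1) = 2*2^l := by rw [show l+1 = 1+l by omega, pow_add]; norm_num
    have e2 : (2:ℕ)^(l+2) = 4*2^l := by rw [show l+2 = 2+l by omega, pow_add]; norm_num
    have e22 : (2:ℕ)^(l+1+1) = 4*2^l := by rw [show l+1+1 = 2+l by omega, pow_add]; norm_num
    have e3 : (2:ℕ)^(l+3) = 8*2^l := by rw [show l+3 = 3+l by omega, pow_add]; norm_num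
    have e33 : (2:ℕ)^(l+2+1) = 8*2^l := by rw [show l+2+1 = 3+l by omega, pow_add]; norm_num
    have e4 : (2:ℕ)^(l+3+1) = 16*2^l := by rw [show l+3+1 = 4+l by omega, pow_add]; norm_num
    -- instantiate the recurrence
    have H81 := hArec (l+3) (8*r+1) (by omega)
    have H83 := hArec (l+3) (8*r+3) (by omega)
    have H85 := hArec (l+3) (8*r+5) (by omega)
    have H87 := hArec (l+3) (8*r+7) (by omega)
    have H41 := hArec (l+2) (4*r+1) (by omega)
    have H43 := hArec (l+2) (4*r+3) (by omega)
    have H21 := hArec (l+1) (2*r+1) (by omega)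
    rw [e3, e4, show 8*2^l + (8*r+1) = 8*n+1 by omega] at H81
    rw [e3, e4, show 8*2^l + (8*r+3) = 8*n+3 by omega] at H83
    rw [e3, e4, show 8*2^l + (8*r+5) = 8*n+5 by omega] at H85
    rw [e3, e4, show 8*2^l + (8*r+7) = 8*n+7 by omega] at H87
    rw [e2, e33, show 4*2^l + (4*r+1) = 4*n+1 by omega] at H41
    rw [e2, e33, show 4*2^l + (4*r+3) = 4*n+3 by omega] at H43
    rw [e1, e22, show 2*2^l + (2*r+1) = 2*n+1 by omega] at H21
    -- identity for 8n+1
    have h1 : A (8*n+1) = A (4*n+1) := by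
      by_cases hc : 2*r < 2^l
      · rw [if_pos (by omega)] at H81
        rw [if_pos (by omega)] at H41
        rw [H81, H41, (IH r (by omega)).1]
      · rw [if_neg (by omega)] at H81
        rw [if_neg (by omega)] at H41
        set s := 2*2^l - r - 1 with hs
        rw [show 16*2^l - (8*r+1) = 8*s+7 by omega] at H81
        rw [show 8*2^l - (4*r+1) = 4*s+3 by omega] at H41
        rw [H81, H41, (IH s (by omega)).2.2.2]
    -- identity for 8n+3
    have h3 : A (8*n+3) = A (2*n+1) + 1 := by
      by_cases hc : 2*r+1 ≤ 2^l
      · rw [if_pos (by omega)] at H83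
        rw [if_pos (by omega)] at H21
        rw [H83, H21, (IH r (by omega)).2.1]
      · rw [if_neg (by omega)] at H83
        rw [if_neg (by omega)] at H21
        set u := 2*2^l - r - 1 with hu
        rw [show 16*2^l - (8*r+3) = 8*u+5 by omega] at H83
        rw [show 4*2^l - (2*r+1) = 2*u+1 by omega] at H21
        rw [H83, H21, (IH u (by omega)).2.2.1]
    -- identity for 8n+5
    have h5 : A (8*n+5) = A (2*n+1) + 1 := by
      by_cases hc : 2*r+2 ≤ 2^l
      · rw [if_pos (by omega)] at H85
        rw [if_pos (by omega)] at H21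
        rw [H85, H21, (IH r (by omega)).2.2.1]
      · rw [if_neg (by omega)] at H85
        rw [if_neg (by omega)] at H21
        set u := 2*2^l - r - 1 with hu
        rw [show 16*2^l - (8*r+5) = 8*u+3 by omega] at H85
        rw [show 4*2^l - (2*r+1) = 2*u+1 by omega] at H21
        rw [H85, H21, (IH u (by omega)).2.1]
    -- identity for 8n+7
    have h7 : A (8*n+7) = A (4*n+3) := by
      by_cases hc : 2*r+2 ≤ 2^l
      · rw [if_pos (by omega)] at H87
        rw [if_pos (by omega)] at H43
        rw [H87, H43, (IH r (by omega)).2.2.2]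
      · rw [if_neg (by omega)] at H87
        rw [if_neg (by omega)] at H43
        set s := 2*2^l - r - 1 with hs
        rw [show 16*2^l - (8*r+7) = 8*s+1 by omega] at H87
        rw [show 8*2^l - (4*r+3) = 4*s+1 by omega] at H43
        rw [H87, H43, (IH s (by omega)).1]
    exact ⟨h1, h3, h5, h7⟩

lemma regular_of_identities (A : ℕ → ℤ)
    (h2 : ∀ n, A (2*n) = A n)
    (h81 : ∀ n, A (8*n+1) = A (4*n+1))
    (h83 : ∀ n, A (8*n+3) = A (2*n+1) + 1)
    (h85 : ∀ n, A (8*n+5) = A (2*n+1) + 1)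
    (h87 : ∀ n, A (8*n+7) = A (4*n+3)) :
    IsTwoRegular A := by
  set B1 : ℕ → ℤ := fun n => A (2*n+1) with hB1
  set B2 : ℕ → ℤ := fun n => A (4*n+1) with hB2
  set B3 : ℕ → ℤ := fun n => A (4*n+3) with hB3
  set G : Set (ℕ → ℤ) := {A, B1, B2, B3, (1 : ℕ → ℤ)} with hG
  have mA : A ∈ G := by left; rfl
  have mB1 : B1 ∈ G := by right; left; rfl
  have mB2 : B2 ∈ G := by right; right; left; rfl
  have mB3 : B3 ∈ G := by right; right; right; left; rfl
  have m1 : (1 : ℕ → ℤ) ∈ G := by right; right; right; right; rfl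
  have key : ∀ i : ℕ, ∀ j < 2 ^ i, (fun n => A (2^i * n + j)) ∈ Submodule.span ℤ G := by
    intro i
    induction i using Nat.strong_induction_on with
    | _ i IH =>
      match i, IH with
      | 0, _ =>
        intro j hj
        interval_cases j
        have : (fun n => A (2^0 * n + 0)) = A := by funext n; norm_num
        rw [this]; exact Submodule.subset_span mA
      | 1, _ =>
        intro j hj
        interval_cases j
        · have : (fun n => A (2^1 * n + 0)) = A := by
            funext n; simp only [pow_one, add_zero]; exact h2 n
          rw [this]; exact Submodule.subset_span mA
        · have : (fun n => A (2^1 * n + 1)) = B1 := by funext n; norm_num [hB1]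
          rw [this]; exact Submodule.subset_span mB1
      | 2, _ =>
        intro j hj
        interval_cases j
        · have : (fun n => A (2^2 * n + 0)) = A := by
            funext n
            have := h2 (2*n); have h2n := h2 n
            simp only [add_zero]
            calc A (2^2*n) = A (2*(2*n)) := by ring_nf
            _ = A (2*n) := h2 (2*n)
            _ = A n := h2 n
          rw [this]; exact Submodule.subset_span mA
        · have : (fun n => A (2^2 * n + 1)) = B2 := by funext n; norm_num [hB2]
          rw [this]; exact Submodule.subset_span mB2
        · have : (fun n => A (2^2 * n + 2)) = B1 := by
            funext n
            calc A (2^2*n+2) = A (2*(2*n+1)) := by ring_nf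
            _ = A (2*n+1) := h2 (2*n+1)
          rw [this]; exact Submodule.subset_span mB1
        · have : (fun n => A (2^2 * n + 3)) = B3 := by funext n; norm_num [hB3]
          rw [this]; exact Submodule.subset_span mB3
      | (i+3), IH =>
        intro j hj
        have e3 : (2:ℕ)^(i+3) = 8 * 2^i := by rw [show i+3 = 3+i by omega, pow_add]; norm_num
        have e2 : (2:ℕ)^(i+2) = 4 * 2^i := by rw [show i+2 = 2+i by omega, pow_add]; norm_num
        have e1 : (2:ℕ)^(i+1) = 2 * 2^i := by rw [show i+1 = 1+i by omega, pow_add]; norm_num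
        rcases Nat.even_or_odd j with he | ho
        · obtain ⟨j', hj'⟩ := he
          have : (fun n => A (2^(i+3) * n + j)) = (fun n => A (2^(i+2) * n + j')) := by
            funext n
            calc A (2^(i+3)*n+j) = A (2*(2^(i+2)*n+j')) := by
                  rw [e3, e2, hj']; ring_nf
            _ = A (2^(i+2)*n+j') := h2 _
          rw [this]
          exact IH (i+2) (by omega) j' (by omega)
        · have hodd : j % 2 = 1 := Nat.odd_iff.mp ho
          have hd : j % 8 = 1 ∨ j % 8 = 3 ∨ j % 8 = 5 ∨ j % 8 = 7 := by omega
          set m := j / 8 with hm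
          have hjm : j = 8 * m + j % 8 := by omega
          rcases hd with hd | hd | hd | hd
          · -- j = 8m+1 : reduces to (i+2, 4m+1)
            have : (fun n => A (2^(i+3) * n + j)) = (fun n => A (2^(i+2) * n + (4*m+1))) := by
              funext n
              calc A (2^(i+3)*n+j) = A (8*(2^i*n+m)+1) := by rw [e3, hjm, hd]; ring_nf
              _ = A (4*(2^i*n+m)+1) := h81 _
              _ = A (2^(i+2)*n+(4*m+1)) := by rw [e2]; ring_nf
            rw [this]
            exact IH (i+2) (by omega) (4*m+1) (by omega)
          · -- j = 8m+3 : reduces to (i+1, 2m+1) plus constant 1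
            have : (fun n => A (2^(i+3) * n + j))
                = (fun n => A (2^(i+1) * n + (2*m+1))) + (1 : ℕ → ℤ) := by
              funext n
              show A (2^(i+3)*n+j) = A (2^(i+1)*n+(2*m+1)) + 1
              calc A (2^(i+3)*n+j) = A (8*(2^i*n+m)+3) := by rw [e3, hjm, hd]; ring_nf
              _ = A (2*(2^i*n+m)+1) + 1 := h83 _
              _ = A (2^(i+1)*n+(2*m+1)) + 1 := by rw [e1]; ring_nf
            rw [this]
            exact Submodule.add_mem _ (IH (i+1) (by omega) (2*m+1) (by omega))
              (Submodule.subset_span m1)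
          · -- j = 8m+5
            have : (fun n => A (2^(i+3) * n + j))
                = (fun n => A (2^(i+1) * n + (2*m+1))) + (1 : ℕ → ℤ) := by
              funext n
              show A (2^(i+3)*n+j) = A (2^(i+1)*n+(2*m+1)) + 1
              calc A (2^(i+3)*n+j) = A (8*(2^i*n+m)+5) := by rw [e3, hjm, hd]; ring_nf
              _ = A (2*(2^i*n+m)+1) + 1 := h85 _
              _ = A (2^(i+1)*n+(2*m+1)) + 1 := by rw [e1]; ring_nf
            rw [this]
            exact Submodule.add_mem _ (IH (i+1) (by omega) (2*m+1) (by omega))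
              (Submodule.subset_span m1)
          · -- j = 8m+7 : reduces to (i+2, 4m+3)
            have : (fun n => A (2^(i+3) * n + j)) = (fun n => A (2^(i+2) * n + (4*m+3))) := by
              funext n
              calc A (2^(i+3)*n+j) = A (8*(2^i*n+m)+7) := by rw [e3, hjm, hd]; ring_nf
              _ = A (4*(2^i*n+m)+3) := h87 _
              _ = A (2^(i+2)*n+(4*m+3)) := by rw [e2]; ring_nf
            rw [this]
            exact IH (i+2) (by omega) (4*m+3) (by omega)
  have hle : Submodule.span ℤ (kernel2 A) ≤ Submodule.span ℤ G := by
    rw [Submodule.span_le]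
    rintro t ⟨i, j, hj, rfl⟩
    exact key i j hj
  have hGfin : G.Finite := Set.toFinite _
  have hfg : (Submodule.span ℤ G).FG := Submodule.fg_span hGfin
  have : IsNoetherian ℤ (Submodule.span ℤ G) := isNoetherian_of_fg_of_noetherian _ hfg
  exact isNoetherian_submodule.mp this _ hle

theorem stmt1 (A : ℕ → ℤ) (hA0 : A 0 = 0)
    (hArec : ∀ l r : ℕ, r < 2 ^ l →
      A (2 ^ l + r) = if 2 * r ≤ 2 ^ l then A r + 1 else A (2 ^ (l + 1) - r)) :
    (∀ n, A (2 * n) = A n) ∧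
    (∀ n, A (8 * n + 1) = A (4 * n + 1)) ∧
    (∀ n, A (8 * n + 3) = A (2 * n + 1) + 1) ∧
    (∀ n, A (8 * n + 5) = A (2 * n + 1) + 1) ∧
    (∀ n, A (8 * n + 7) = A (4 * n + 3)) ∧
    IsTwoRegular A := by
  have h2 := Adouble A hArec
  have hodd := Aodd A hA0 hArec
  exact ⟨h2, fun n => (hodd n).1, fun n => (hodd n).2.1, fun n => (hodd n).2.2.1,
    fun n => (hodd n).2.2.2,
    regular_of_identities A h2 (fun n => (hodd n).1) (fun n => (hodd n).2.1)
      (fun n => (hodd n).2.2.1) (fun n => (hodd n).2.2.2)⟩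
end

section
/- If n is even, then M₀(n), m₀(n) and Δ₀(n) are all even. -/
/-- A sequence is 2-automatic if its 2-kernel is finite. -/
def IsTwoAutomatic (s : ℕ → ℤ) : Prop :=
  (kernel2 s).Finite

/-- The period-doubling word, fixed point (starting with 0) of 0 ↦ 01, 1 ↦ 00:
its `n`-th letter is the parity of the 2-adic valuation of `n+1`. -/
def pd (n : ℕ) : ℕ := (n + 1).factorization 2 % 2

/-- The Thue–Morse word, fixed point (starting with 0) of 0 ↦ 01, 1 ↦ 10:
its `n`-th letter is the parity of the binary digit sum of `n`. -/
def tm (n : ℕ) : ℕ := (Nat.digits 2 n).sum % 2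

/-- The 2-block coding `x = block(p, 2)` of the period-doubling word. -/
def xw (n : ℕ) : ℕ := 2 * pd n + pd (n + 1)

/-- The 2-block coding `y = block(t, 2)` of the Thue–Morse word. -/
def yw (n : ℕ) : ℕ := 2 * tm n + tm (n + 1)

/-- The factor of an infinite word `w` of length `len` occurring at position `i`. -/
def factorAt (w : ℕ → ℕ) (i len : ℕ) : List ℕ :=
  (List.range len).map fun k => w (i + k)

/-- `u` is a factor of the infinite word `w`. -/
def IsFactor (w : ℕ → ℕ) (u : List ℕ) : Prop :=
  ∃ i, u = factorAt w i u.length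

/-- Maximal number of 0's in a factor of `x` of length `n`. -/
noncomputable def M0 (n : ℕ) : ℕ := sSup {k | ∃ i, (factorAt xw i n).count 0 = k}

/-- Minimal number of 0's in a factor of `x` of length `n`. -/
noncomputable def m0 (n : ℕ) : ℕ := sInf {k | ∃ i, (factorAt xw i n).count 0 = k}

noncomputable def D0 (n : ℕ) : ℕ := M0 n - m0 n

/-- Maximal number of 2's in a factor of `x` of length `n`. -/
noncomputable def M2c (n : ℕ) : ℕ := sSup {k | ∃ i, (factorAt xw i n).count 2 = k}

/-- Minimal number of 2's in a factor of `x` of length `n`. -/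
noncomputable def m2c (n : ℕ) : ℕ := sInf {k | ∃ i, (factorAt xw i n).count 2 = k}

/-- The max-jump function for `M0`. -/
noncomputable def JM0 : ℕ → ℕ
  | 0 => 0
  | n + 1 => if M0 n < M0 (n + 1) then 1 else 0

/-- The min-jump function for `m0`. -/
noncomputable def jm0 (n : ℕ) : ℕ := if m0 n < m0 (n + 1) then 1 else 0

/-- Maximal total number of 1's and 2's in a factor of `y` of length `n`. -/
noncomputable def M12 (n : ℕ) : ℕ :=
  sSup {k | ∃ i, (factorAt yw i n).count 1 + (factorAt yw i n).count 2 = k}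

/-- Minimal total number of 1's and 2's in a factor of `y` of length `n`. -/
noncomputable def m12 (n : ℕ) : ℕ :=
  sInf {k | ∃ i, (factorAt yw i n).count 1 + (factorAt yw i n).count 2 = k}

noncomputable def D12 (n : ℕ) : ℕ := M12 n - m12 n

/-- Maximal total number of 0's and 3's in a factor of `y` of length `n`. -/
noncomputable def M03 (n : ℕ) : ℕ :=
  sSup {k | ∃ i, (factorAt yw i n).count 0 + (factorAt yw i n).count 3 = k}

/-- Minimal total number of 0's and 3's in a factor of `y` of length `n`. -/
noncomputable def m03 (n : ℕ) : ℕ :=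
  sInf {k | ∃ i, (factorAt yw i n).count 0 + (factorAt yw i n).count 3 = k}

/-- The max-jump function for `M03`. -/
noncomputable def JM03 (n : ℕ) : ℕ := if M03 (n - 1) < M03 n then 1 else 0

/-- The min-jump function for `m03`. -/
noncomputable def jm03 (n : ℕ) : ℕ := if m03 n < m03 (n + 1) then 1 else 0

/-- Abelian complexity: the number of abelian equivalence classes (i.e. distinct
multisets of letters) of factors of `w` of length `n`. -/
noncomputable def abComplexity (w : ℕ → ℕ) (n : ℕ) : ℕ :=
  Set.ncard {m : Multiset ℕ | ∃ i, (↑(factorAt w i n) : Multiset ℕ) = m}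

/-- The number of occurrences of `v` as a factor of `u`. -/
def countFactor (u v : List ℕ) : ℕ :=
  ((List.range (u.length + 1 - v.length)).filter
    fun i => decide ((u.drop i).take v.length = v)).length

/-- 2-abelian complexity: the number of 2-abelian equivalence classes of factors of `w`
of length `n`, where two words are 2-abelian equivalent when every word of length at most 2
occurs equally often in both. -/
noncomputable def abel2Complexity (w : ℕ → ℕ) (n : ℕ) : ℕ :=
  Set.ncard {f : List ℕ → ℕ |
    ∃ i, f = fun v => if v.length ≤ 2 then countFactor (factorAt w i n) v else 0}

/-- The morphism φ : 0 ↦ 12, 1 ↦ 12, 2 ↦ 00. -/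
def phiL : ℕ → List ℕ
  | 0 => [1, 2]
  | 1 => [1, 2]
  | 2 => [0, 0]
  | _ => []

/-- The morphism τ : 0 ↦ 0, 1 ↦ 2, 2 ↦ 1. -/
def tauL : ℕ → ℕ
  | 1 => 2
  | 2 => 1
  | n => n

/-- indicator of a zero letter -/
def aZ (n : ℕ) : ℕ := if xw n = 0 then 1 else 0

/-- number of zeros in the factor of length n at position i -/
def SZ (i n : ℕ) : ℕ := (factorAt xw i n).count 0

lemma pd_even (k : ℕ) : pd (2 * k) = 0 := by
  unfold pd
  rw [Nat.factorization_eq_zero_of_not_dvd (by omega)]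

lemma aZ_pair (k : ℕ) : aZ (2 * k) = aZ (2 * k + 1) := by
  have h1 : xw (2 * k) = pd (2 * k + 1) := by
    unfold xw; rw [pd_even k]; omega
  have h2 : xw (2 * k + 1) = 2 * pd (2 * k + 1) := by
    unfold xw
    have h : 2 * k + 1 + 1 = 2 * (k + 1) := by ring
    rw [h, pd_even (k + 1)]; omega
  unfold aZ
  rw [h1, h2]
  split_ifs with h h' <;> omega

lemma SZ_succ (i n : ℕ) : SZ i (n + 1) = SZ i n + aZ (i + n) := by
  unfold SZ factorAt aZ
  rw [List.range_succ, List.map_append, List.count_append]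
  simp [List.count_singleton']

lemma SZ_cons (i n : ℕ) : SZ i (n + 1) = aZ i + SZ (i + 1) n := by
  unfold SZ factorAt aZ
  rw [List.range_succ_eq_map, List.map_cons, List.count_cons]
  have h : (List.range n).map ((fun k => xw (i + k)) ∘ Nat.succ)
      = (List.range n).map (fun k => xw (i + 1 + k)) := by
    apply List.map_congr_left
    intro x _
    simp [Function.comp]
    congr 1
    omega
  rw [List.map_map, h]
  simp only [Nat.add_zero, beq_iff_eq]
  split_ifs with h1 <;> omega

lemma SZ_rel (i n : ℕ) : SZ (i + 1) n + aZ i = SZ i n + aZ (i + n) := by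
  have h1 := SZ_succ i n
  have h2 := SZ_cons i n
  omega

lemma SZ_prefix (i n : ℕ) : SZ 0 (i + n) = SZ 0 i + SZ i n := by
  induction n with
  | zero => simp [SZ, factorAt]
  | succ m ih =>
      have : i + (m + 1) = (i + m) + 1 := by omega
      rw [this, SZ_succ 0 (i + m), ih, SZ_succ i m]
      simp only [Nat.zero_add]
      omega

lemma SZ_zero_even (k : ℕ) : SZ 0 (2 * k) % 2 = 0 := by
  induction k with
  | zero => simp [SZ, factorAt]
  | succ m ih =>
      have h : 2 * (m + 1) = (2 * m + 1) + 1 := by ring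
      rw [h, SZ_succ, SZ_succ]
      have := aZ_pair m
      simp only [Nat.zero_add]
      omega

lemma SZ_even_even (j k : ℕ) : SZ (2 * j) (2 * k) % 2 = 0 := by
  have h := SZ_prefix (2 * j) (2 * k)
  have h1 := SZ_zero_even j
  have h2 : SZ 0 (2 * j + 2 * k) % 2 = 0 := by
    have : 2 * j + 2 * k = 2 * (j + k) := by ring
    rw [this]; exact SZ_zero_even (j + k)
  omega

lemma SZ_avg (j k : ℕ) :
    2 * SZ (2 * j + 1) (2 * k) = SZ (2 * j) (2 * k) + SZ (2 * j + 2) (2 * k) := by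
  have r1 := SZ_rel (2 * j) (2 * k)
  have r2 := SZ_rel (2 * j + 1) (2 * k)
  have e1 := aZ_pair j
  have e2 : aZ (2 * j + 2 * k) = aZ (2 * j + 2 * k + 1) := by
    have : 2 * j + 2 * k = 2 * (j + k) := by ring
    rw [this]; exact aZ_pair (j + k)
  have e3 : 2 * j + 1 + 2 * k = 2 * j + 2 * k + 1 := by omega
  have e4 : 2 * j + 1 + 1 = 2 * j + 2 := by omega
  rw [e3, e4] at r2
  omega

lemma SZ_le (i n : ℕ) : SZ i n ≤ n := by
  have := List.count_le_length (a := 0) (l := factorAt xw i n)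
  simpa [SZ, factorAt] using this

lemma TZ_bdd (n : ℕ) : BddAbove {k | ∃ i, (factorAt xw i n).count 0 = k} := by
  refine ⟨n, fun k hk => ?_⟩
  obtain ⟨i, rfl⟩ := hk
  exact SZ_le i n

lemma TZ_ne (n : ℕ) : {k | ∃ i, (factorAt xw i n).count 0 = k}.Nonempty :=
  ⟨(factorAt xw 0 n).count 0, 0, rfl⟩

lemma M0_even (k : ℕ) : M0 (2 * k) % 2 = 0 := by
  have hmem : M0 (2 * k) ∈ {m | ∃ i, (factorAt xw i (2 * k)).count 0 = m} :=
    Nat.sSup_mem (TZ_ne _) (TZ_bdd _)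
  obtain ⟨i, hi⟩ := hmem
  have hle : ∀ i', SZ i' (2 * k) ≤ M0 (2 * k) := fun i' =>
    le_csSup (TZ_bdd _) ⟨i', rfl⟩
  rcases Nat.even_or_odd i with ⟨j, hj⟩ | ⟨j, hj⟩
  · have : SZ (2 * j) (2 * k) = M0 (2 * k) := by
      rw [← hi]; unfold SZ; rw [hj]; ring_nf
    have he := SZ_even_even j k
    omega
  · have hSi : SZ (2 * j + 1) (2 * k) = M0 (2 * k) := by
      rw [← hi]; unfold SZ; rw [hj]
    have havg := SZ_avg j k
    have h1 := hle (2 * j)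
    have h2 := hle (2 * j + 2)
    have he := SZ_even_even j k
    omega

lemma m0_even (k : ℕ) : m0 (2 * k) % 2 = 0 := by
  have hmem : m0 (2 * k) ∈ {m | ∃ i, (factorAt xw i (2 * k)).count 0 = m} :=
    Nat.sInf_mem (TZ_ne _)
  obtain ⟨i, hi⟩ := hmem
  have hle : ∀ i', m0 (2 * k) ≤ SZ i' (2 * k) := fun i' =>
    Nat.sInf_le ⟨i', rfl⟩
  rcases Nat.even_or_odd i with ⟨j, hj⟩ | ⟨j, hj⟩
  · have : SZ (2 * j) (2 * k) = m0 (2 * k) := by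
      rw [← hi]; unfold SZ; rw [hj]; ring_nf
    have he := SZ_even_even j k
    omega
  · have hSi : SZ (2 * j + 1) (2 * k) = m0 (2 * k) := by
      rw [← hi]; unfold SZ; rw [hj]
    have havg := SZ_avg j k
    have h1 := hle (2 * j)
    have h2 := hle (2 * j + 2)
    have he := SZ_even_even j k
    omega

theorem stmt2 (n : ℕ) (hn : Even n) :
    Even (M0 n) ∧ Even (m0 n) ∧ Even (D0 n) := by
  obtain ⟨k, hk⟩ := hn
  have hn2 : n = 2 * k := by omega
  subst hn2
  have h1 := M0_even k
  have h2 := m0_even k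
  refine ⟨Nat.even_iff.mpr h1, Nat.even_iff.mpr h2, Nat.even_iff.mpr ?_⟩
  unfold D0
  omega
end

section
/- For all n ∈ ℕ, the abelian complexity of x satisfies: P¹_x(n) = (3/2)·Δ₀(n) + 3/2 if Δ₀(n) is odd; P¹_x(n) = (3/2)·Δ₀(n) + 1 if Δ₀(n) is even and n − m₀(n) is even; P¹_x(n) = (3/2)·Δ₀(n) + 2 if Δ₀(n) is even and n − m₀(n) is odd. -/
def cnt (a i n : ℕ) : ℕ := ((Finset.range n).filter (fun k => xw (i + k) = a)).card

lemma pd_le_one (n : ℕ) : pd n ≤ 1 := Nat.lt_succ_iff.mp (Nat.mod_lt _ (by norm_num))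

lemma pd_two_mul (n : ℕ) : pd (2 * n) = 0 := by
  unfold pd
  rw [Nat.factorization_eq_zero_of_not_dvd (by omega)]

lemma pd_two_mul_add_one (n : ℕ) : pd (2 * n + 1) = 1 - pd n := by
  unfold pd
  have h : 2 * n + 1 + 1 = 2 * (n + 1) := by ring
  rw [h, Nat.factorization_mul (by norm_num) (by omega)]
  have h2 : (Nat.factorization 2) 2 = 1 := Nat.Prime.factorization_self (by norm_num)
  simp only [Finsupp.add_apply, h2]
  omega

lemma pd_eq_one_succ {n : ℕ} (h : pd n = 1) : pd (n + 1) = 0 := by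
  rcases Nat.even_or_odd n with ⟨m, hm⟩ | ⟨m, hm⟩
  · have h0 : pd n = 0 := by rw [hm, ← two_mul, pd_two_mul]
    omega
  · subst hm
    have h2 : 2 * m + 1 + 1 = 2 * (m + 1) := by ring
    rw [h2, pd_two_mul]

lemma pd_eq_one_pred {n : ℕ} (h : pd (n + 1) = 1) : pd n = 0 := by
  rcases Nat.even_or_odd n with ⟨m, hm⟩ | ⟨m, hm⟩
  · subst hm; rw [← two_mul, pd_two_mul]
  · subst hm
    have h2 : 2 * m + 1 + 1 = 2 * (m + 1) := by ring
    rw [h2, pd_two_mul] at h; omega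

lemma xw_le_two (m : ℕ) : xw m ≤ 2 := by
  unfold xw
  have h1 := pd_le_one m; have h2 := pd_le_one (m + 1)
  by_cases h : pd m = 1
  · rw [pd_eq_one_succ h]; omega
  · omega

lemma xw_one_iff (j : ℕ) : xw j = 1 ↔ xw (j + 1) = 2 := by
  unfold xw
  have h1 := pd_le_one j; have h2 := pd_le_one (j + 1)
  have h3 := pd_le_one (j + 2)
  have e : j + 1 + 1 = j + 2 := by omega
  rw [e]
  constructor
  · intro h
    have hp : pd (j + 1) = 1 := by omega
    have h4 := pd_eq_one_succ hp
    rw [e] at h4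
    omega
  · intro h
    have hp : pd (j + 1) = 1 := by omega
    have h5 := pd_eq_one_pred hp
    omega

lemma pd_reflect : ∀ s m : ℕ, 0 < m → m < 2 ^ s → pd (2 ^ s - m - 1) = pd (m - 1) := by
  intro s
  induction s with
  | zero => intro m h1 h2; omega
  | succ s ih =>
    intro m h1 h2
    have hp : 2 ^ (s + 1) = 2 * 2 ^ s := by rw [pow_succ]; ring
    rcases Nat.even_or_odd m with ⟨m', hm⟩ | ⟨m', hm⟩
    · -- m = 2m', m' > 0, m' < 2^s
      have hm' : m = 2 * m' := by omega
      have h1' : 0 < m' := by omega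
      have h2' : m' < 2 ^ s := by omega
      have e1 : 2 ^ (s + 1) - m - 1 = 2 * (2 ^ s - m' - 1) + 1 := by omega
      have e2 : m - 1 = 2 * (m' - 1) + 1 := by omega
      rw [e1, e2, pd_two_mul_add_one, pd_two_mul_add_one, ih m' h1' h2']
    · -- m = 2m' + 1
      have hm' : m = 2 * m' + 1 := by omega
      have e1 : 2 ^ (s + 1) - m - 1 = 2 * (2 ^ s - m' - 1) := by omega
      have e2 : m - 1 = 2 * m' := by omega
      rw [e1, e2, pd_two_mul, pd_two_mul]

lemma tauL_tauL (x : ℕ) : tauL (tauL x) = x := by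
  rcases x with _ | _ | _ | x <;> rfl

lemma tauL_form {a b : ℕ} (ha : a ≤ 1) (hb : b ≤ 1) : tauL (2 * a + b) = 2 * b + a := by
  interval_cases a <;> interval_cases b <;> rfl

lemma xw_reflect (s i n k : ℕ) (hk : k < n) (hs : i + n + 1 < 2 ^ s) :
    xw (2 ^ s - (i + n + 2) + k) = tauL (xw (i + (n - 1 - k))) := by
  have h1 : xw (i + (n - 1 - k)) = 2 * pd (i + n - 1 - k) + pd (i + n - k) := by
    unfold xw
    rw [show i + (n - 1 - k) = i + n - 1 - k by omega,
      show i + n - 1 - k + 1 = i + n - k by omega]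
  have h2 : xw (2 ^ s - (i + n + 2) + k) = 2 * pd (2 ^ s - (i + n + 1 - k) - 1)
      + pd (2 ^ s - (i + n - k) - 1) := by
    unfold xw
    rw [show 2 ^ s - (i + n + 2) + k = 2 ^ s - (i + n + 1 - k) - 1 by omega,
      show 2 ^ s - (i + n + 1 - k) - 1 + 1 = 2 ^ s - (i + n - k) - 1 by omega]
  rw [h1, h2, pd_reflect s (i + n + 1 - k) (by omega) (by omega),
    pd_reflect s (i + n - k) (by omega) (by omega)]
  have e1 : i + n + 1 - k - 1 = i + n - k := by omega
  have e2 : i + n - k - 1 = i + n - 1 - k := by omega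
  rw [e1, e2, tauL_form (pd_le_one _) (pd_le_one _)]

lemma count_factorAt (a i n : ℕ) : (factorAt xw i n).count a = cnt a i n := by
  induction n with
  | zero => rfl
  | succ n ih =>
    unfold factorAt cnt at *
    rw [List.range_succ, Finset.range_add_one, List.map_append, List.count_append,
      Finset.filter_insert]
    by_cases h : xw (i + n) = a
    · rw [if_pos h, Finset.card_insert_of_notMem (by simp)]
      simp [ih, h]
    · rw [if_neg h]
      simp [ih, List.count_singleton', h]

lemma cnt_le (a i n : ℕ) : cnt a i n ≤ n := by
  unfold cnt
  calc ((Finset.range n).filter _).card ≤ (Finset.range n).card := Finset.card_filter_le _ _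
  _ = n := Finset.card_range n

lemma cnt_succ_right (a i n : ℕ) :
    cnt a i (n + 1) = cnt a i n + if xw (i + n) = a then 1 else 0 := by
  unfold cnt
  rw [Finset.range_add_one, Finset.filter_insert]
  by_cases h : xw (i + n) = a
  · rw [if_pos h, if_pos h, Finset.card_insert_of_notMem (by simp)]
  · rw [if_neg h, if_neg h]; omega

lemma cnt_succ_left (a i n : ℕ) :
    cnt a i (n + 1) = (if xw i = a then 1 else 0) + cnt a (i + 1) n := by
  induction n with
  | zero =>
    by_cases h : xw i = a <;> simp [cnt, Finset.range_one, Finset.filter_singleton, h]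
  | succ n ih =>
    rw [cnt_succ_right, ih, cnt_succ_right]
    have e : i + 1 + n = i + (n + 1) := by omega
    rw [e]; ring

lemma cnt_sum (i n : ℕ) : cnt 0 i n + cnt 1 i n + cnt 2 i n = n := by
  induction n with
  | zero => rfl
  | succ n ih =>
    rw [cnt_succ_right, cnt_succ_right, cnt_succ_right]
    have := xw_le_two (i + n)
    interval_cases h : xw (i + n) <;> simp_all <;> omega

lemma cnt_one (i n : ℕ) : cnt 1 i n = cnt 2 (i + 1) n := by
  unfold cnt
  apply Finset.card_bij (fun k _ => k)
  · intro k hk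
    simp only [Finset.mem_filter, Finset.mem_range] at *
    exact ⟨hk.1, by have := (xw_one_iff (i + k)).mp hk.2; rwa [show i + k + 1 = i + 1 + k by omega] at this⟩
  · intro a ha b hb h; exact h
  · intro k hk
    simp only [Finset.mem_filter, Finset.mem_range] at *
    refine ⟨k, ⟨hk.1, ?_⟩, rfl⟩
    rw [xw_one_iff, show i + k + 1 = i + 1 + k by omega]
    exact hk.2

lemma cnt_shift (a i n : ℕ) :
    cnt a (i + 1) n + (if xw i = a then 1 else 0) = cnt a i n + (if xw (i + n) = a then 1 else 0) := by
  have h1 := cnt_succ_right a i n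
  have h2 := cnt_succ_left a i n
  omega

lemma cnt_reflect (i n : ℕ) :
    ∃ j, ∀ a, cnt a j n = cnt (tauL a) i n := by
  obtain ⟨s, hs⟩ : ∃ s, i + n + 1 < 2 ^ s := ⟨i + n + 1, Nat.lt_two_pow_self⟩
  refine ⟨2 ^ s - (i + n + 2), fun a => ?_⟩
  unfold cnt
  apply Finset.card_bij (fun k _ => n - 1 - k)
  · intro k hk
    simp only [Finset.mem_filter, Finset.mem_range] at *
    refine ⟨by omega, ?_⟩
    have := xw_reflect s i n k hk.1 hs
    rw [hk.2] at this
    rw [← tauL_tauL (xw (i + (n - 1 - k))), ← this]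
  · intro k hk l hl h
    simp only [Finset.mem_filter, Finset.mem_range] at *
    omega
  · intro k hk
    simp only [Finset.mem_filter, Finset.mem_range] at *
    refine ⟨n - 1 - k, ⟨by omega, ?_⟩, by omega⟩
    rw [xw_reflect s i n (n - 1 - k) (by omega) hs, show n - 1 - (n - 1 - k) = k by omega, hk.2, tauL_tauL]

lemma ivt_up (f : ℕ → ℕ) (hstep : ∀ i, f (i + 1) ≤ f i + 1 ∧ f i ≤ f (i + 1) + 1) :
    ∀ d p c, f p ≤ c → c ≤ f (p + d) → ∃ i, f i = c := by
  intro d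
  induction d with
  | zero => intro p c h1 h2; rw [show p + 0 = p from rfl] at h2; exact ⟨p, by omega⟩
  | succ d ih =>
    intro p c h1 h2
    rw [show p + (d + 1) = p + d + 1 from rfl] at h2
    by_cases h : c ≤ f (p + d)
    · exact ih p c h1 h
    · have := hstep (p + d)
      exact ⟨p + d + 1, by omega⟩

lemma ivt_down (f : ℕ → ℕ) (hstep : ∀ i, f (i + 1) ≤ f i + 1 ∧ f i ≤ f (i + 1) + 1) :
    ∀ d p c, f (p + d) ≤ c → c ≤ f p → ∃ i, f i = c := by
  intro d
  induction d with
  | zero => intro p c h1 h2; rw [show p + 0 = p from rfl] at h1; exact ⟨p, by omega⟩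
  | succ d ih =>
    intro p c h1 h2
    rw [show p + (d + 1) = p + d + 1 from rfl] at h1
    by_cases h : f (p + d) ≤ c
    · exact ih p c h h2
    · have := hstep (p + d)
      exact ⟨p + d + 1, by omega⟩

lemma ivt (f : ℕ → ℕ) (hstep : ∀ i, f (i + 1) ≤ f i + 1 ∧ f i ≤ f (i + 1) + 1)
    (p q c : ℕ) (h1 : f p ≤ c) (h2 : c ≤ f q) : ∃ i, f i = c := by
  rcases Nat.le_total p q with h | h
  · obtain ⟨d, rfl⟩ := Nat.exists_eq_add_of_le h
    exact ivt_up f hstep d p c h1 h2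
  · obtain ⟨d, rfl⟩ := Nat.exists_eq_add_of_le h
    exact ivt_down f hstep d q c h1 h2

lemma card_even_range (N : ℕ) : ((Finset.range N).filter (fun t => Even t)).card = (N + 1) / 2 := by
  induction N with
  | zero => rfl
  | succ N ih =>
    rw [Finset.range_add_one, Finset.filter_insert]
    by_cases h : Even N
    · rw [if_pos h, Finset.card_insert_of_notMem (by simp)]
      obtain ⟨m, hm⟩ := h; omega
    · rw [if_neg h]
      have h2 := Nat.even_iff.not.mp h
      omega

lemma card_odd_range (N : ℕ) : ((Finset.range N).filter (fun t => ¬ Even t)).card = N / 2 := by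
  have h := Finset.card_filter_add_card_filter_not (s := Finset.range N)
    (p := fun t => Even t)
  rw [card_even_range, Finset.card_range] at h
  omega

lemma factorAt_mem_le {i n b : ℕ} (h : b ∈ factorAt xw i n) : b ≤ 2 := by
  simp only [factorAt, List.mem_map, List.mem_range] at h
  obtain ⟨k, -, rfl⟩ := h
  exact xw_le_two _

lemma sum_ite_even (N a b : ℕ) :
    (∑ t ∈ Finset.range N, if Even t then a else b) = (N + 1) / 2 * a + N / 2 * b := by
  rw [Finset.sum_ite, Finset.sum_const, Finset.sum_const, card_even_range, card_odd_range,
    smul_eq_mul, smul_eq_mul]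

theorem stmt3 (n : ℕ) :
    (Odd (D0 n) → 2 * abComplexity xw n = 3 * D0 n + 3) ∧
    (Even (D0 n) → Even (n - m0 n) → 2 * abComplexity xw n = 3 * D0 n + 2) ∧
    (Even (D0 n) → Odd (n - m0 n) → 2 * abComplexity xw n = 3 * D0 n + 4) := by
  -- basic facts about M0, m0
  have hset : {k | ∃ i, (factorAt xw i n).count 0 = k} = {k | ∃ i, cnt 0 i n = k} := by
    ext k; simp only [Set.mem_setOf_eq, count_factorAt]
  have hA_ne : {k | ∃ i, cnt 0 i n = k}.Nonempty := ⟨cnt 0 0 n, 0, rfl⟩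
  have hA_bdd : BddAbove {k | ∃ i, cnt 0 i n = k} := by
    refine ⟨n, fun k hk => ?_⟩
    obtain ⟨i, rfl⟩ := hk
    exact cnt_le 0 i n
  have hM_mem : ∃ i, cnt 0 i n = M0 n := by
    have := Nat.sSup_mem (hset ▸ hA_ne) (hset ▸ hA_bdd)
    rw [M0, hset] at *
    exact this
  have hm_mem : ∃ i, cnt 0 i n = m0 n := by
    have := Nat.sInf_mem (hset ▸ hA_ne)
    rw [m0, hset] at *
    exact this
  obtain ⟨iM, hiM⟩ := hM_mem
  obtain ⟨im, him⟩ := hm_mem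
  have hub : ∀ i, cnt 0 i n ≤ M0 n := by
    intro i
    rw [M0, hset]
    exact le_csSup hA_bdd ⟨i, rfl⟩
  have hlb : ∀ i, m0 n ≤ cnt 0 i n := by
    intro i
    rw [m0, hset]
    exact Nat.sInf_le ⟨i, rfl⟩
  have hMn : M0 n ≤ n := hiM ▸ cnt_le 0 iM n
  have hmM : m0 n ≤ M0 n := him ▸ hub im
  have hD0 : D0 n = M0 n - m0 n := rfl
  -- delta facts
  set d : ℕ → ℤ := fun i => (cnt 1 i n : ℤ) - cnt 2 i n with hd_def
  have hd : ∀ i, (d i = 0 ∨ d i = 1 ∨ d i = -1) ∧ ((n - cnt 0 i n) % 2 = 0 ↔ d i = 0) := by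
    intro i
    have h1 := cnt_one i n
    have h2 := cnt_shift 2 i n
    have h3 := cnt_sum i n
    have h4 := cnt_le 0 i n
    simp only [hd_def]
    by_cases e1 : xw i = 2 <;> by_cases e2 : xw (i + n) = 2 <;>
      simp only [e1, e2, if_pos, if_neg, if_true, if_false] at h2 <;> omega
  -- the classifying map
  set g : ℕ → ℕ × ℤ := fun i => (cnt 0 i n, d i) with hg_def
  -- Step 1 : abComplexity = ncard (range g)
  have step1 : abComplexity xw n = (Set.range g).ncard := by
    have hS : {m : Multiset ℕ | ∃ i, (↑(factorAt xw i n) : Multiset ℕ) = m}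
        = Set.range (fun i => (↑(factorAt xw i n) : Multiset ℕ)) := rfl
    set Φ : Multiset ℕ → ℕ × ℤ :=
      fun m => (m.count 0, (m.count 1 : ℤ) - m.count 2) with hΦ_def
    have key : ∀ i, Φ (↑(factorAt xw i n)) = g i := by
      intro i
      simp only [hΦ_def, hg_def, Multiset.coe_count, count_factorAt, hd_def]
    have himg : Φ '' Set.range (fun i => (↑(factorAt xw i n) : Multiset ℕ)) = Set.range g := by
      rw [← Set.range_comp]
      exact congrArg _ (funext key)
    have hinj : Set.InjOn Φ (Set.range (fun i => (↑(factorAt xw i n) : Multiset ℕ))) := by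
      rintro m1 ⟨i, rfl⟩ m2 ⟨j, rfl⟩ heq
      simp only [hΦ_def, Prod.mk.injEq, Multiset.coe_count, count_factorAt] at heq
      have s1 := cnt_sum i n
      have s2 := cnt_sum j n
      have hc0 : cnt 0 i n = cnt 0 j n := heq.1
      have hc1 : cnt 1 i n = cnt 1 j n := by omega
      have hc2 : cnt 2 i n = cnt 2 j n := by omega
      have : ∀ a, (factorAt xw i n).count a = (factorAt xw j n).count a := by
        intro a
        rcases Nat.lt_or_ge a 3 with ha | ha
        · interval_cases a <;> simp [count_factorAt, hc0, hc1, hc2]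
        · rw [List.count_eq_zero_of_not_mem (fun h => by have := factorAt_mem_le h; omega),
            List.count_eq_zero_of_not_mem (fun h => by have := factorAt_mem_le h; omega)]
      exact Multiset.ext.mpr (fun a => by simpa [Multiset.coe_count] using this a)
    rw [abComplexity, hS, ← himg, Set.ncard_image_of_injOn hinj]
  -- explicit finite set
  set B : ℕ → Finset (ℕ × ℤ) := fun t =>
    if Even (n - m0 n - t) then {(m0 n + t, 0)}
    else {(m0 n + t, 1), (m0 n + t, -1)} with hB_def
  set E : Finset (ℕ × ℤ) := (Finset.range (D0 n + 1)).biUnion B with hE_def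
  have hB_fst : ∀ t p, p ∈ B t → p.1 = m0 n + t := by
    intro t p hp
    simp only [hB_def] at hp
    split at hp <;> simp only [Finset.mem_insert, Finset.mem_singleton] at hp
    · rw [hp]
    · rcases hp with rfl | rfl <;> rfl
  have hstep : ∀ i, cnt 0 (i + 1) n ≤ cnt 0 i n + 1 ∧ cnt 0 i n ≤ cnt 0 (i + 1) n + 1 := by
    intro i
    have := cnt_shift 0 i n
    by_cases e1 : xw i = 0 <;> by_cases e2 : xw (i + n) = 0 <;>
      simp only [e1, e2, if_pos, if_neg, if_true, if_false] at this <;> omega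
  have hrange : Set.range g = ↑E := by
    ext p
    simp only [Set.mem_range, hE_def, Finset.coe_biUnion, Set.mem_iUnion, Finset.mem_coe,
      Finset.mem_range]
    constructor
    · rintro ⟨i, rfl⟩
      refine ⟨cnt 0 i n - m0 n, by have := hub i; omega, ?_⟩
      have hc : m0 n + (cnt 0 i n - m0 n) = cnt 0 i n := by have := hlb i; omega
      have hpar : n - m0 n - (cnt 0 i n - m0 n) = n - cnt 0 i n := by
        have := hlb i; have h2 := cnt_le 0 i n; omega
      simp only [hB_def, hpar]
      obtain ⟨hd1, hd2⟩ := hd i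
      by_cases he : Even (n - cnt 0 i n)
      · rw [if_pos he]
        have h0 : d i = 0 := hd2.mp (Nat.even_iff.mp he)
        simp [hg_def, hc, h0]
      · rw [if_neg he]
        have hne : ¬ d i = 0 := fun h => he (Nat.even_iff.mpr (hd2.mpr h))
        simp only [Finset.mem_insert, Finset.mem_singleton, hg_def, Prod.mk.injEq]
        rcases hd1 with h | h | h
        · exact absurd h hne
        · exact Or.inl ⟨hc.symm, h⟩
        · exact Or.inr ⟨hc.symm, h⟩
    · rintro ⟨t, ht, hp⟩
      have hDK : D0 n ≤ n - m0 n := by omega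
      obtain ⟨i, hi⟩ := ivt (fun i => cnt 0 i n) hstep im iM (m0 n + t)
        (by show cnt 0 im n ≤ m0 n + t; omega) (by show m0 n + t ≤ cnt 0 iM n; omega)
      replace hi : cnt 0 i n = m0 n + t := hi
      have hpar : n - m0 n - t = n - cnt 0 i n := by have := cnt_le 0 i n; omega
      obtain ⟨hd1, hd2⟩ := hd i
      simp only [hB_def, hpar] at hp
      by_cases he : Even (n - cnt 0 i n)
      · rw [if_pos he] at hp
        have h0 : d i = 0 := hd2.mp (Nat.even_iff.mp he)
        simp only [Finset.mem_singleton] at hp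
        exact ⟨i, by rw [hp, hg_def]; simp only; rw [hi, h0]⟩
      · rw [if_neg he] at hp
        have hne : ¬ d i = 0 := fun h => he (Nat.even_iff.mpr (hd2.mpr h))
        simp only [Finset.mem_insert, Finset.mem_singleton] at hp
        obtain ⟨j, hj⟩ := cnt_reflect i n
        have hj0 : cnt 0 j n = cnt 0 i n := hj 0
        have hj1 : cnt 1 j n = cnt 2 i n := hj 1
        have hj2 : cnt 2 j n = cnt 1 i n := hj 2
        rcases hd1 with h | h | h
        · exact absurd h hne
        · rcases hp with rfl | rfl
          · exact ⟨i, by rw [hg_def]; simp only; rw [hi, h]⟩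
          · refine ⟨j, ?_⟩
            rw [hg_def]
            simp only [hd_def] at h ⊢
            rw [hj0, hj1, hj2, hi]
            rw [Prod.mk.injEq]
            exact ⟨rfl, by omega⟩
        · rcases hp with rfl | rfl
          · refine ⟨j, ?_⟩
            rw [hg_def]
            simp only [hd_def] at h ⊢
            rw [hj0, hj1, hj2, hi]
            rw [Prod.mk.injEq]
            exact ⟨rfl, by omega⟩
          · exact ⟨i, by rw [hg_def]; simp only; rw [hi, h]⟩
  -- cardinality of E
  have hcard : E.card = ∑ t ∈ Finset.range (D0 n + 1), if Even (n - m0 n - t) then 1 else 2 := by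
    rw [hE_def, Finset.card_biUnion]
    · apply Finset.sum_congr rfl
      intro t ht
      simp only [hB_def]
      split
      · exact Finset.card_singleton _
      · rw [Finset.card_insert_of_notMem (by norm_num), Finset.card_singleton]
    · intro t1 h1 t2 h2 hne
      rw [Function.onFun, Finset.disjoint_left]
      intro p hp1 hp2
      have e1 := hB_fst t1 p hp1
      have e2 := hB_fst t2 p hp2
      omega
  have hab : abComplexity xw n = E.card := by
    rw [step1, hrange, Set.ncard_coe_finset]
  have hDK : D0 n ≤ n - m0 n := by omega
  have hsum : E.card = if Even (n - m0 n) then (D0 n + 2) / 2 * 1 + (D0 n + 1) / 2 * 2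
      else (D0 n + 2) / 2 * 2 + (D0 n + 1) / 2 * 1 := by
    rw [hcard]
    by_cases hK : Even (n - m0 n)
    · rw [if_pos hK, ← sum_ite_even (D0 n + 1) 1 2]
      apply Finset.sum_congr rfl
      intro t ht
      simp only [Finset.mem_range] at ht
      have hts : t ≤ n - m0 n := by omega
      simp only [Nat.even_sub hts]
      by_cases het : Even t
      · rw [if_pos (iff_of_true hK het), if_pos het]
      · rw [if_neg (fun hh => het (hh.mp hK)), if_neg het]
    · rw [if_neg hK, ← sum_ite_even (D0 n + 1) 2 1]
      apply Finset.sum_congr rfl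
      intro t ht
      simp only [Finset.mem_range] at ht
      have hts : t ≤ n - m0 n := by omega
      simp only [Nat.even_sub hts]
      by_cases het : Even t
      · rw [if_neg (fun hh => hK (hh.mpr het)), if_pos het]
      · rw [if_pos (iff_of_false hK het), if_neg het]
  refine ⟨?_, ?_, ?_⟩
  · intro hodd
    have hD := Nat.odd_iff.mp hodd
    by_cases hK : Even (n - m0 n)
    · rw [if_pos hK] at hsum; rw [hab, hsum]; omega
    · rw [if_neg hK] at hsum; rw [hab, hsum]; omega
  · intro he1 he2
    have h1 := Nat.even_iff.mp he1
    rw [if_pos he2] at hsum; rw [hab, hsum]; omega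
  · intro he1 he2
    have h1 := Nat.even_iff.mp he1
    have h2 := Nat.odd_iff.mp he2
    rw [if_neg (by rw [Nat.even_iff]; omega)] at hsum
    rw [hab, hsum]; omega
end

section
/- Let τ be the morphism on {0,1,2}* defined by τ(0)=0, τ(1)=2, τ(2)=1. If w is a factor of x, then the reversal of τ(w) is also a factor of x. -/
lemma fact_le_aux {k a b : ℕ} (ha : 0 < a) (hb : 0 < b) (hab : a + b = 2 ^ k) :
    a.factorization 2 ≤ b.factorization 2 := by
  set d := a.factorization 2 with hd
  have hdvd : 2 ^ d ∣ a := Nat.ordProj_dvd a 2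
  have hle : 2 ^ d ≤ a := Nat.le_of_dvd ha hdvd
  have hdk : d ≤ k := by
    by_contra h
    have : 2 ^ k < 2 ^ d := Nat.pow_lt_pow_right (by norm_num) (by omega)
    omega
  have hdvd2 : 2 ^ d ∣ 2 ^ k := pow_dvd_pow 2 hdk
  have hb' : b = 2 ^ k - a := by omega
  have hdvdb : 2 ^ d ∣ b := by
    rw [hb']; exact Nat.dvd_sub hdvd2 hdvd
  exact (Nat.Prime.pow_dvd_iff_le_factorization Nat.prime_two (by omega)).mp hdvdb

lemma two_pow_sub_factorization {k m : ℕ} (h0 : 0 < m) (h : m < 2 ^ k) :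
    (2 ^ k - m).factorization 2 = m.factorization 2 := by
  have h1 : 0 < 2 ^ k - m := by omega
  have h2 : (2 ^ k - m) + m = 2 ^ k := by omega
  exact le_antisymm (fact_le_aux h1 h0 h2) (fact_le_aux (k := k) h0 h1 (by omega))

lemma pd_symm {k t : ℕ} (h : t + 2 ≤ 2 ^ k) : pd (2 ^ k - 2 - t) = pd t := by
  unfold pd
  have h1 : 2 ^ k - 2 - t + 1 = 2 ^ k - (t + 1) := by omega
  rw [h1, two_pow_sub_factorization (by omega) (by omega)]

lemma xw_symm {k n : ℕ} (h : n + 3 ≤ 2 ^ k) : xw (2 ^ k - 3 - n) = tauL (xw n) := by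
  have e2 : 2 ^ k - 3 - n + 1 = 2 ^ k - 2 - n := by omega
  have e1 : 2 ^ k - 3 - n = 2 ^ k - 2 - (n + 1) := by omega
  unfold xw
  rw [e2, e1, pd_symm (by omega), pd_symm (by omega)]
  have ha : pd n = 0 ∨ pd n = 1 := by unfold pd; omega
  have hb : pd (n + 1) = 0 ∨ pd (n + 1) = 1 := by unfold pd; omega
  rcases ha with h1 | h1 <;> rcases hb with h2 | h2 <;> rw [h1, h2] <;> rfl

lemma factorAt_length (w : ℕ → ℕ) (i len : ℕ) : (factorAt w i len).length = len := by
  simp [factorAt]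

theorem stmt8 (w : List ℕ) (hw : IsFactor xw w) :
    IsFactor xw ((w.map tauL).reverse) := by
  obtain ⟨i, hi⟩ := hw
  by_cases h0 : w.length = 0
  · rw [List.length_eq_zero_iff.mp h0]; exact ⟨0, rfl⟩
  have hpos : 0 < w.length := Nat.pos_of_ne_zero h0
  set L := w.length with hL
  have hp : i + L + 2 < 2 ^ (i + L + 2) := Nat.lt_two_pow_self
  refine ⟨2 ^ (i + L + 2) - 2 - i - L, ?_⟩
  have hlen : ((w.map tauL).reverse).length = L := by simp [hL]
  apply List.ext_getElem
  · rw [hlen, factorAt_length]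
  · intro n h1 h2
    rw [hlen] at h1
    have hwget : ∀ m (hm : m < L), w[m] = xw (i + m) := by
      intro m hm
      have : w[m] = (factorAt xw i L)[m]'(by rw [factorAt_length]; exact hm) := by
        congr 1
      rw [this]
      simp [factorAt]
    rw [List.getElem_reverse, List.getElem_map]
    have hLl : (w.map tauL).length = L := by simp [hL]
    simp only [factorAt, List.getElem_map, List.getElem_range]
    simp only [List.length_map]
    rw [hwget (w.length - 1 - n) (by omega)]
    have hsym := xw_symm (k := i + L + 2) (n := i + (L - 1 - n)) (by omega)
    have e : 2 ^ (i + L + 2) - 3 - (i + (L - 1 - n)) =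
        2 ^ (i + L + 2) - 2 - i - L + n := by omega
    rw [e] at hsym
    rw [← hL]
    rw [← hsym]
end
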